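/- Fix w ∈ Sₙ and let v ↦ v' be the greedy operation associated to w. If w₀ = n(n−1)⋯21 denotes the longest element of Sₙ, then w₀' = w. -/

import Mathlib

namespace SchubertToric

open Equiv

/-- The number of inversions (= the length `ℓ`) of a permutation. -/
def invCount {n : ℕ} (w : Equiv.Perm (Fin n)) : ℕ :=
  ((Finset.univ : Finset (Fin n × Fin n)).filter fun p => p.1 < p.2 ∧ w p.2 < w p.1).card

/-- `initSeg w d` is the set `{w(1), …, w(d)}` (0-indexed: images of the first `d` indices). -/
def initSeg {n : ℕ} (w : Equiv.Perm (Fin n)) (d : ℕ) : Finset (Fin n) :=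
  (Finset.univ.filter fun i : Fin n => (i : ℕ) < d).image w

/-- `domLE S T`: the increasing rearrangement of `S` is componentwise ≤ that of `T`. -/
def domLE {n : ℕ} (S T : Finset (Fin n)) : Prop :=
  List.Forall₂ (· ≤ ·) (S.sort (· ≤ ·)) (T.sort (· ≤ ·))

/-- Bruhat order on `
Sₙ`, via the tableau criterion. -/
def bruhatLE {n : ℕ} (v w : Equiv.Perm (Fin n)) : Prop :=
  ∀ d : ℕ, domLE (initSeg v d) (initSeg w d)

/-- `GreedyRel w v vp` says that `vp = v'`, the result of the greedy operation associated
to `w`: there is a sequence of indices `idx 0, idx 1, …`, each chosen as the *least* index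
not previously chosen such that the increasing rearrangement of the previously chosen values
together with the new value is componentwise at most `{w(1),…,w(d)}`, and `vp d = v (idx d)`. -/
def GreedyRel {n : ℕ} (w v vp : Equiv.Perm (Fin n)) : Prop :=
  ∃ idx : Fin n → Fin n,
    (∀ d : Fin n, vp d = v (idx d)) ∧
    ∀ d : Fin n,
      IsLeast {i : Fin n |
        (∀ e : Fin n, e < d → idx e ≠ i) ∧
        domLE (insert (v i)
            ((Finset.univ.filter fun e : Fin n => e < d).image fun e => v (idx e)))
          (initSeg w ((d : ℕ) + 1))}
        (idx d)

/-- Right weak order: `rightWeakLE u v` iff `v = u·s_{i₁}⋯s_{i_k}` with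
`ℓ(u·s_{i₁}⋯s_{i_j}) = ℓ(u) + j` for all `0 ≤ j ≤ k`. -/
def rightWeakLE {n : ℕ} (u v : Equiv.Perm (Fin n)) : Prop :=
  ∃ L : List (Equiv.Perm (Fin n)),
    (∀ s ∈ L, ∃ (i : Fin n) (h : (i : ℕ) + 1 < n), s = Equiv.swap i ⟨(i : ℕ) + 1, h⟩) ∧
    v = u * L.prod ∧
    ∀ k ≤ L.length, invCount (u * (L.take k).prod) = invCount u + k

/-- `Ref(w) = {(w(i),w(j)) : i < j, ℓ(w) − ℓ(t_{w(i),w(j)}·w) = 1}`. -/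
def RefSet {n : ℕ} (w : Equiv.Perm (Fin n)) : Set (Fin n × Fin n) :=
  {p | ∃ i j : Fin n, i < j ∧ p = (w i, w j) ∧
    invCount (Equiv.swap (w i) (w j) * w) + 1 = invCount w}

/-- The (undirected) graph `Γ_w` on `Fin n` whose edges are the pairs in `Ref(w)`. -/
def refGraph {n : ℕ} (w : Equiv.Perm (Fin n)) : SimpleGraph (Fin n) :=
  SimpleGraph.fromRel fun a b => (a, b) ∈ RefSet w

/-- The vertices of `Γ_w`: the integers occurring in pairs of `Ref(w)`. -/
def refVerts {n : ℕ} (w : Equiv.Perm (Fin n)) : Set (Fin n) :=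
  {a | ∃ b, (a, b) ∈ RefSet w ∨ (b, a) ∈ RefSet w}

/-- The cone `C(v) = {x ∈ ℝⁿ : x_{v(1)} ≤ x_{v(2)} ≤ ⋯ ≤ x_{v(n)}}`. -/
def coneC {n : ℕ} (v : Equiv.Perm (Fin n)) : Set (Fin n → ℝ) :=
  {x | ∀ i j : Fin n, i ≤ j → x (v i) ≤ x (v j)}

/-- `Ẽ_w(u) = {(u(i),u(j)) : i < j, t_{u(i),u(j)}·u ≤ w, |ℓ(u) − ℓ(t_{u(i),u(j)}·u)| = 1}`. -/
def Etil {n : ℕ} (w u : Equiv.Perm (Fin n)) : Set (Fin n × Fin n) :=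
  {p | ∃ i j : Fin n, i < j ∧ p = (u i, u j) ∧
    bruhatLE (Equiv.swap (u i) (u j) * u) w ∧
    (invCount (Equiv.swap (u i) (u j) * u) + 1 = invCount u ∨
      invCount u + 1 = invCount (Equiv.swap (u i) (u j) * u))}

/-- An element `p = (a,b)` of `Ẽ_w(u)` is decomposable if it is a sum (under
`(a,b)+(b,c) = (a,c)`) of two or more other elements of `Ẽ_w(u)`. -/
def Decomposable {n : ℕ} (w u : Equiv.Perm (Fin n)) (p : Fin n × Fin n) : Prop :=
  ∃ (m : ℕ) (c : ℕ → Fin n), 2 ≤ m ∧ c 0 = p.1 ∧ c m = p.2 ∧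
    ∀ i < m, (c i, c (i + 1)) ∈ Etil w u ∧ (c i, c (i + 1)) ≠ p

/-- `E_w(u)`: the indecomposable elements of `Ẽ_w(u)`. -/
def Ew {n : ℕ} (w u : Equiv.Perm (Fin n)) : Set (Fin n × Fin n) :=
  {p | p ∈ Etil w u ∧ ¬ Decomposable w u p}

/-- The longest element `w₀ = n(n−1)⋯21` of `Sₙ`. -/
def w0 {n : ℕ} : Equiv.Perm (Fin n) :=
  Function.Involutive.toPerm Fin.rev Fin.rev_rev

lemma domLE_refl {n : ℕ} (S : Finset (Fin n)) : domLE S S :=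
  List.forall₂_same.2 (fun _ _ => le_refl _)

lemma forall2_antisymm {α : Type*} [PartialOrder α] :
    ∀ {l m : List α}, List.Forall₂ (· ≤ ·) l m → List.Forall₂ (· ≤ ·) m l → l = m := by
  intro l m h1 h2
  induction h1 with
  | nil => rfl
  | cons hab h ih =>
      rcases h2 with _ | ⟨hba, h2'⟩
      rw [le_antisymm hab hba, ih h2']

lemma domLE_antisymm {n : ℕ} {S T : Finset (Fin n)} (h1 : domLE S T) (h2 : domLE T S) :
    S = T := by
  have h := forall2_antisymm h1 h2
  have hS : (S.sort (· ≤ ·)).toFinset = S := Finset.sort_toFinset S _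
  have hT : (T.sort (· ≤ ·)).toFinset = T := Finset.sort_toFinset T _
  rw [← hS, ← hT, h]

lemma sorted_forall2_orderedInsert {n : ℕ} {a c : Fin n} :
    ∀ {l : List (Fin n)}, List.Pairwise (· ≤ ·) (c :: l) → c ≤ a →
      List.Forall₂ (· ≤ ·) (c :: l) (l.orderedInsert (· ≤ ·) a)
  | [], _, hca => by simpa [List.orderedInsert] using hca
  | d :: l', hs, hca => by
      rw [List.orderedInsert]
      rw [List.pairwise_cons] at hs
      split_ifs with h
      · exact List.Forall₂.cons hca (List.forall₂_same.2 (fun _ _ => le_refl _))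
      · exact List.Forall₂.cons (hs.1 d (by simp))
          (sorted_forall2_orderedInsert hs.2 (le_of_lt (not_le.1 h)))

lemma orderedInsert_mono {n : ℕ} {a b : Fin n} (hba : b ≤ a) :
    ∀ {l : List (Fin n)}, List.Pairwise (· ≤ ·) l →
      List.Forall₂ (· ≤ ·) (l.orderedInsert (· ≤ ·) b) (l.orderedInsert (· ≤ ·) a)
  | [], _ => by simpa [List.orderedInsert] using hba
  | c :: l', hs => by
      rw [List.orderedInsert, List.orderedInsert]
      rcases le_or_gt b c with h1 | h1
      · rw [if_pos h1]
        rcases le_or_gt a c with h2 | h2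
        · rw [if_pos h2]
          exact List.Forall₂.cons hba (List.forall₂_same.2 (fun _ _ => le_refl _))
        · rw [if_neg (not_le.2 h2)]
          exact List.Forall₂.cons h1 (sorted_forall2_orderedInsert hs h2.le)
      · rw [if_neg (not_le.2 h1), if_neg (not_le.2 (lt_of_lt_of_le h1 hba))]
        rw [List.pairwise_cons] at hs
        exact List.Forall₂.cons (le_refl c) (orderedInsert_mono hba hs.2)

lemma sort_insert_eq {n : ℕ} (S : Finset (Fin n)) (a : Fin n) (ha : a ∉ S) :
    (insert a S).sort (· ≤ ·) = (S.sort (· ≤ ·)).orderedInsert (· ≤ ·) a := by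
  have h1 : List.Perm ((insert a S).sort (· ≤ ·)) (a :: S.sort (· ≤ ·)) := by
    have h2 : ((insert a S).sort (· ≤ ·) : Multiset (Fin n)) =
        ((a :: S.sort (· ≤ ·) : List (Fin n)) : Multiset (Fin n)) := by
      rw [Finset.sort_eq]
      rw [Finset.insert_val, Multiset.ndinsert_of_notMem ha, ← Finset.sort_eq S (· ≤ ·),
        Multiset.cons_coe]
    exact Quotient.exact h2
  exact List.Perm.eq_of_pairwise' (Finset.pairwise_sort _ _)
    ((Finset.pairwise_sort _ _).orderedInsert _ _) (h1.trans (List.perm_orderedInsert _ _ _).symm)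

lemma domLE_insert_mono {n : ℕ} {S : Finset (Fin n)} {a b : Fin n}
    (hba : b ≤ a) (ha : a ∉ S) (hb : b ∉ S) : domLE (insert b S) (insert a S) := by
  unfold domLE
  rw [sort_insert_eq S a ha, sort_insert_eq S b hb]
  exact orderedInsert_mono hba (Finset.pairwise_sort _ _)

lemma eq_of_domLE_insert {n : ℕ} {S : Finset (Fin n)} {a b : Fin n}
    (hba : b ≤ a) (ha : a ∉ S) (hb : b ∉ S)
    (h : domLE (insert a S) (insert b S)) : a = b := by
  have := domLE_antisymm h (domLE_insert_mono hba ha hb)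
  have : a ∈ insert b S := this ▸ Finset.mem_insert_self a S
  rcases Finset.mem_insert.1 this with h' | h'
  · exact h'
  · exact absurd h' ha


/-- The greedy operation applied to the longest element `w₀ = n(n−1)⋯21`
yields `w₀' = w`. -/
theorem greedy_longest_eq {n : ℕ} (w vp : Equiv.Perm (Fin n))
    (h : GreedyRel w w0 vp) : vp = w := by
  obtain ⟨idx, hvp, hleast⟩ := h
  have hw0 : ∀ x : Fin n, w0 x = Fin.rev x := fun _ => rfl
  have key : ∀ m : ℕ, ∀ d : Fin n, (d : ℕ) = m → w0 (idx d) = w d := by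
    intro m
    induction m using Nat.strong_induction_on with
    | _ m IH =>
      intro d hd
      have IH' : ∀ e : Fin n, e < d → w0 (idx e) = w e := fun e he =>
        IH (e : ℕ) (hd ▸ he) e rfl
      set S : Finset (Fin n) :=
        (Finset.univ.filter fun e : Fin n => e < d).image fun e => w0 (idx e) with hSdef
      have hfil : (Finset.univ.filter fun e : Fin n => e < d)
          = Finset.univ.filter (fun i : Fin n => (i : ℕ) < (d : ℕ)) := by
        apply Finset.filter_congr
        intro x _
        exact Iff.rfl
      have hS : S = initSeg w (d : ℕ) := by
        rw [hSdef, initSeg, ← hfil]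
        exact Finset.image_congr (fun e he => IH' e (Finset.mem_filter.1 he).2)
      have hstep : initSeg w ((d : ℕ) + 1) = insert (w d) (initSeg w (d : ℕ)) := by
        rw [initSeg, initSeg, ← Finset.image_insert]
        congr 1
        ext i
        simp only [Finset.mem_filter, Finset.mem_univ, true_and, Finset.mem_insert]
        constructor
        · intro hi
          rcases Nat.lt_succ_iff_lt_or_eq.1 hi with hi' | hi'
          · exact Or.inr (by simpa using hi')
          · exact Or.inl (Fin.ext hi')
        · rintro (rfl | hi)
          · exact Nat.lt_succ_self _
          · exact Nat.lt_succ_of_lt (by simpa using hi)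
      have hwd : w d ∉ initSeg w (d : ℕ) := by
        rw [initSeg]
        intro hmem
        obtain ⟨i, hi, hiw⟩ := Finset.mem_image.1 hmem
        have : i = d := w.injective hiw
        subst this
        exact lt_irrefl _ ((Finset.mem_filter.1 hi).2)
      obtain ⟨⟨hne, hdom⟩, hlb⟩ := hleast d
      have hmemstar : (w0 (w d)) ∈ {i : Fin n |
          (∀ e : Fin n, e < d → idx e ≠ i) ∧
          domLE (insert (w0 i)
              ((Finset.univ.filter fun e : Fin n => e < d).image fun e => w0 (idx e)))
            (initSeg w ((d : ℕ) + 1))} := by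
        constructor
        · intro e he heq
          have : w0 (idx e) = w d := by rw [heq, hw0, hw0, Fin.rev_rev]
          rw [IH' e he] at this
          exact (ne_of_lt he) (w.injective this)
        · have h1 : w0 (w0 (w d)) = w d := by rw [hw0, hw0, Fin.rev_rev]
          rw [← hSdef, h1, hS, ← hstep]
          exact domLE_refl _
      have hle : idx d ≤ w0 (w d) := hlb hmemstar
      have hge : w0 (w d) ≤ idx d := by
        by_contra hlt
        push_neg at hlt
        have hba : w d < w0 (idx d) := by
          rw [hw0]
          have := Fin.rev_lt_rev.mpr hlt
          rwa [hw0, Fin.rev_rev] at this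
        have haS : w0 (idx d) ∉ initSeg w (d : ℕ) := by
          rw [← hS]
          intro hmem
          obtain ⟨e, he, hew⟩ := Finset.mem_image.1 hmem
          have : idx e = idx d := w0.injective hew
          exact hne e (Finset.mem_filter.1 he).2 this
        have hdom' := hdom
        rw [← hSdef, hS, hstep] at hdom' 
        have := eq_of_domLE_insert hba.le haS hwd hdom'
        exact absurd this (ne_of_gt hba)
      have hidx : idx d = w0 (w d) := le_antisymm hle hge
      rw [hidx, hw0, hw0, Fin.rev_rev]
  apply Equiv.ext
  intro d
  rw [hvp d, key (d : ℕ) d rfl]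
end SchubertToric
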